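/- arXiv:2109.10818 — 5 statements merged into one kernel-verified Lean document; each statement's English description precedes it below -/
import Mathlib

section
/- Fix S > 0 and ξ ∈ ℝ, and define f(x) = N(ξ + (1/S)·ln x) − x^{−2ξ/S}·N(ξ − (1/S)·ln x) for x > 0. If ξ ≥ 0, then f'(x) > 0 for every x > 0. -/
open Real Set Filter Topology MeasureTheory

noncomputable def stdNormalCDF (x : ℝ) : ℝ :=
  (Real.sqrt (2 * Real.pi))⁻¹ * ∫ t in Set.Iic x, Real.exp (-t ^ 2 / 2)

lemma gauss_integrable : MeasureTheory.Integrable (fun t : ℝ => Real.exp (-t ^ 2 / 2)) := by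
  have := integrable_exp_neg_mul_sq (b := (1/2 : ℝ)) (by norm_num)
  convert this using 2 with t
  ring_nf

lemma sqrt2pi_pos : 0 < Real.sqrt (2 * Real.pi) :=
  Real.sqrt_pos.mpr (by positivity)

lemma stdNormalCDF_pos (x : ℝ) : 0 < stdNormalCDF x := by
  unfold stdNormalCDF
  apply mul_pos (inv_pos.mpr sqrt2pi_pos)
  rw [MeasureTheory.integral_pos_iff_support_of_nonneg_ae
    (Filter.Eventually.of_forall fun t => (Real.exp_pos _).le)
    gauss_integrable.integrableOn]
  have : Function.support (fun t : ℝ => Real.exp (-t ^ 2 / 2)) = Set.univ := by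
    ext t; simp [Function.mem_support, (Real.exp_pos _).ne']
  rw [this, Measure.restrict_apply_univ, Real.volume_Iic]
  exact ENNReal.zero_lt_top

lemma stdNormalCDF_eq (x : ℝ) : stdNormalCDF x = stdNormalCDF 0 +
    (Real.sqrt (2 * Real.pi))⁻¹ * ∫ t in (0:ℝ)..x, Real.exp (-t ^ 2 / 2) := by
  unfold stdNormalCDF
  rw [← intervalIntegral.integral_Iic_sub_Iic gauss_integrable.integrableOn
    gauss_integrable.integrableOn]
  ring

lemma stdNormalCDF_hasDerivAt (x : ℝ) :
    HasDerivAt stdNormalCDF ((Real.sqrt (2 * Real.pi))⁻¹ * Real.exp (-x ^ 2 / 2)) x := by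
  have h : HasDerivAt (fun u => ∫ t in (0:ℝ)..u, Real.exp (-t ^ 2 / 2))
      (Real.exp (-x ^ 2 / 2)) x :=
    intervalIntegral.integral_hasDerivAt_right gauss_integrable.intervalIntegrable
      gauss_integrable.1.stronglyMeasurableAtFilter (by fun_prop)
  have := (h.const_mul ((Real.sqrt (2 * Real.pi))⁻¹)).const_add (stdNormalCDF 0)
  have e : stdNormalCDF = fun u => stdNormalCDF 0 +
      (Real.sqrt (2 * Real.pi))⁻¹ * ∫ t in (0:ℝ)..u, Real.exp (-t ^ 2 / 2) :=
    funext stdNormalCDF_eq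
  rw [e]
  exact this

theorem f_deriv_pos_of_xi_nonneg (S ξ : ℝ) (hS : 0 < S) (hξ : 0 ≤ ξ)
    (f : ℝ → ℝ)
    (hf : ∀ x > 0, f x = stdNormalCDF (ξ + (1 / S) * Real.log x) -
        x ^ (-2 * ξ / S) * stdNormalCDF (ξ - (1 / S) * Real.log x)) :
    ∀ x > 0, 0 < deriv f x := by
  intro x hx
  set a := ξ + (1 / S) * Real.log x with ha
  set b := ξ - (1 / S) * Real.log x with hb
  set p := -2 * ξ / S with hp
  have h1 : HasDerivAt (fun y : ℝ => ξ + (1 / S) * Real.log y) ((1 / S) * x⁻¹) x :=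
    ((Real.hasDerivAt_log hx.ne').const_mul (1 / S)).const_add ξ
  have h1' : HasDerivAt (fun y : ℝ => stdNormalCDF (ξ + (1 / S) * Real.log y))
      ((Real.sqrt (2 * Real.pi))⁻¹ * Real.exp (-a ^ 2 / 2) * ((1 / S) * x⁻¹)) x :=
    by have h1c := (stdNormalCDF_hasDerivAt a).comp x h1; exact h1c
  have h2 : HasDerivAt (fun y : ℝ => y ^ p) (p * x ^ (p - 1)) x :=
    Real.hasDerivAt_rpow_const (Or.inl hx.ne')
  have h3i : HasDerivAt (fun y : ℝ => ξ - (1 / S) * Real.log y) (-((1 / S) * x⁻¹)) x :=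
    ((Real.hasDerivAt_log hx.ne').const_mul (1 / S)).const_sub ξ
  have h3 : HasDerivAt (fun y : ℝ => stdNormalCDF (ξ - (1 / S) * Real.log y))
      ((Real.sqrt (2 * Real.pi))⁻¹ * Real.exp (-b ^ 2 / 2) * -((1 / S) * x⁻¹)) x :=
    by have h3c := (stdNormalCDF_hasDerivAt b).comp x h3i; exact h3c
  have hg : HasDerivAt (fun y : ℝ => stdNormalCDF (ξ + (1 / S) * Real.log y) -
      y ^ p * stdNormalCDF (ξ - (1 / S) * Real.log y))
      ((Real.sqrt (2 * Real.pi))⁻¹ * Real.exp (-a ^ 2 / 2) * ((1 / S) * x⁻¹) -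
        (p * x ^ (p - 1) * stdNormalCDF b +
          x ^ p * ((Real.sqrt (2 * Real.pi))⁻¹ * Real.exp (-b ^ 2 / 2) * -((1 / S) * x⁻¹)))) x :=
    h1'.sub (h2.mul h3)
  have hev : f =ᶠ[nhds x] fun y : ℝ => stdNormalCDF (ξ + (1 / S) * Real.log y) -
      y ^ p * stdNormalCDF (ξ - (1 / S) * Real.log y) := by
    filter_upwards [Ioi_mem_nhds hx] with y hy
    exact hf y hy
  rw [hev.deriv_eq, hg.deriv]
  have hc : 0 < (Real.sqrt (2 * Real.pi))⁻¹ := inv_pos.mpr sqrt2pi_pos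
  have hA : 0 < (Real.sqrt (2 * Real.pi))⁻¹ * Real.exp (-a ^ 2 / 2) * ((1 / S) * x⁻¹) := by
    positivity
  have hpn : p ≤ 0 := by rw [hp]; apply div_nonpos_of_nonpos_of_nonneg <;> linarith
  have hB : p * x ^ (p - 1) * stdNormalCDF b ≤ 0 := by
    have h1 : 0 < x ^ (p - 1) := Real.rpow_pos_of_pos hx _
    have h2 : 0 < stdNormalCDF b := stdNormalCDF_pos b
    have h3 := mul_nonpos_of_nonpos_of_nonneg hpn (mul_nonneg h1.le h2.le)
    nlinarith [h3]
  have hC : x ^ p * ((Real.sqrt (2 * Real.pi))⁻¹ * Real.exp (-b ^ 2 / 2) * -((1 / S) * x⁻¹)) ≤ 0 := by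
    have h1 : 0 < x ^ p := Real.rpow_pos_of_pos hx _
    have h2 : 0 < (Real.sqrt (2 * Real.pi))⁻¹ * Real.exp (-b ^ 2 / 2) * ((1 / S) * x⁻¹) := by
      positivity
    nlinarith
  linarith
end

section
/- Fix S > 0 and ξ < 0, and define g(x) = (1/√(2π))·exp(−(ξ − (1/S)·ln x)²/2) + ξ·N(ξ − (1/S)·ln x) for x > 0. Then there exists a unique x₀ ∈ (0,1) such that g(x₀) = 0; moreover g(x) < 0 for 0 < x < x₀ and g(x) > 0 for x > x₀. -/
open Real Set Filter Topology
open MeasureTheory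

namespace GUniqueZeroAux

noncomputable def f (t : ℝ) : ℝ := Real.exp (-t ^ 2 / 2)

lemma f_eq (t : ℝ) : f t = Real.exp (-(1/2 : ℝ) * t ^ 2) := by
  unfold f; ring_nf

lemma f_cont : Continuous f := by
  unfold f; continuity

lemma f_pos (t : ℝ) : 0 < f t := Real.exp_pos _

lemma f_integrable : Integrable f := by
  have h := integrable_exp_neg_mul_sq (b := (1/2 : ℝ)) (by norm_num)
  refine h.congr ?_
  filter_upwards with t
  rw [f_eq]

lemma f_integral : ∫ t, f t = Real.sqrt (2 * Real.pi) := by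
  have h := integral_gaussian (1/2 : ℝ)
  calc ∫ t, f t = ∫ t, Real.exp (-(1/2 : ℝ) * t ^ 2) := by
        simp only [f_eq]
    _ = Real.sqrt (Real.pi / (1/2)) := h
    _ = Real.sqrt (2 * Real.pi) := by norm_num [mul_comm]

lemma f_hasDerivAt (u : ℝ) : HasDerivAt f (-u * f u) u := by
  have h1 : HasDerivAt (fun t : ℝ => -t ^ 2 / 2) (-u) u := by
    have := ((hasDerivAt_pow 2 u).neg).div_const 2
    simpa using this.congr_deriv (by ring)
  unfold f
  simpa [f, mul_comm] using h1.exp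

/-- the "F" function: integral over Iic -/
noncomputable def F (x : ℝ) : ℝ := ∫ t in Set.Iic x, f t

lemma F_eq (x : ℝ) : F x = F 0 + ∫ t in (0:ℝ)..x, f t := by
  have := intervalIntegral.integral_Iic_sub_Iic (f := f) (μ := volume)
    f_integrable.integrableOn f_integrable.integrableOn (a := 0) (b := x)
  unfold F
  linarith [this]

lemma F_hasDerivAt (u : ℝ) : HasDerivAt F (f u) u := by
  have h : HasDerivAt (fun x => ∫ t in (0:ℝ)..x, f t) (f u) u :=
    intervalIntegral.integral_hasDerivAt_right f_integrable.intervalIntegrable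
      (f_cont.stronglyMeasurable.stronglyMeasurableAtFilter)
      f_cont.continuousAt
  have : HasDerivAt (fun x => F 0 + ∫ t in (0:ℝ)..x, f t) (f u) u := h.const_add _
  exact this.congr_of_eventuallyEq (Filter.Eventually.of_forall fun x => (F_eq x))

lemma F_tendsto_atTop : Tendsto F atTop (𝓝 (Real.sqrt (2 * Real.pi))) := by
  rw [← f_integral]
  exact (MeasureTheory.aecover_Iic (tendsto_id (α := ℝ))).integral_tendsto_of_countably_generated
    f_integrable

lemma F_tendsto_atBot : Tendsto F atBot (𝓝 0) := by
  have h : Tendsto (fun x : ℝ => ∫ t in x..(0:ℝ), f t) atBot (𝓝 (F 0)) :=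
    MeasureTheory.intervalIntegral_tendsto_integral_Iic 0 f_integrable.integrableOn tendsto_id
  have heq : ∀ x : ℝ, F x = F 0 - ∫ t in x..(0:ℝ), f t := by
    intro x
    rw [F_eq x, intervalIntegral.integral_symm]
    ring
  have h2 : Tendsto (fun x : ℝ => F 0 - ∫ t in x..(0:ℝ), f t) atBot (𝓝 (F 0 - F 0)) :=
    (tendsto_const_nhds).sub h
  rw [sub_self] at h2
  exact h2.congr fun x => (heq x).symm

lemma sq_tendsto_atBot : Tendsto (fun u : ℝ => u ^ 2) atBot atTop := by
  have : Tendsto (fun u : ℝ => (-u) ^ 2) atBot atTop :=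
    (tendsto_pow_atTop two_ne_zero).comp tendsto_neg_atBot_atTop
  exact this.congr fun u => by ring

lemma f_tendsto (l : Filter ℝ) (hl : Tendsto (fun u : ℝ => u ^ 2) l atTop) :
    Tendsto f l (𝓝 0) := by
  have h1 : Tendsto (fun u : ℝ => -u ^ 2 / 2) l atBot :=
    Filter.Tendsto.atBot_div_const (by norm_num : (0:ℝ) < 2)
      (tendsto_neg_atBot_iff.mpr hl)
  exact Real.tendsto_exp_atBot.comp h1

lemma f_tendsto_atTop : Tendsto f atTop (𝓝 0) :=
  f_tendsto _ (tendsto_pow_atTop two_ne_zero)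

lemma f_tendsto_atBot : Tendsto f atBot (𝓝 0) :=
  f_tendsto _ sq_tendsto_atBot

noncomputable def h (ξ u : ℝ) : ℝ :=
  (Real.sqrt (2 * Real.pi))⁻¹ * f u + ξ * ((Real.sqrt (2 * Real.pi))⁻¹ * F u)

lemma h_eq (ξ u : ℝ) : h ξ u = (Real.sqrt (2 * Real.pi))⁻¹ *
    Real.exp (-u ^ 2 / 2) + ξ * stdNormalCDF u := rfl

lemma sqrt2pi_pos : 0 < Real.sqrt (2 * Real.pi) :=
  Real.sqrt_pos.2 (by positivity)

lemma h_hasDerivAt (ξ u : ℝ) :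
    HasDerivAt (h ξ) ((ξ - u) * ((Real.sqrt (2 * Real.pi))⁻¹ * f u)) u := by
  set c := (Real.sqrt (2 * Real.pi))⁻¹ with hc
  have h1 : HasDerivAt (fun u => c * f u) (c * (-u * f u)) u := (f_hasDerivAt u).const_mul c
  have h2 : HasDerivAt (fun u => ξ * (c * F u)) (ξ * (c * f u)) u :=
    ((F_hasDerivAt u).const_mul c).const_mul ξ
  have h3 := h1.add h2
  have : c * (-u * f u) + ξ * (c * f u) = (ξ - u) * (c * f u) := by ring
  rw [this] at h3
  exact h3

lemma h_continuous (ξ : ℝ) : Continuous (h ξ) :=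
  continuous_iff_continuousAt.2 fun u => (h_hasDerivAt ξ u).differentiableAt.continuousAt

lemma h_deriv (ξ u : ℝ) :
    deriv (h ξ) u = (ξ - u) * ((Real.sqrt (2 * Real.pi))⁻¹ * f u) :=
  (h_hasDerivAt ξ u).deriv

lemma h_strictMonoOn (ξ : ℝ) : StrictMonoOn (h ξ) (Set.Iic ξ) := by
  apply strictMonoOn_of_deriv_pos (convex_Iic ξ) (h_continuous ξ).continuousOn
  intro u hu
  rw [interior_Iic] at hu
  rw [h_deriv]
  have h1 : 0 < ξ - u := sub_pos.2 hu
  have h2 : 0 < (Real.sqrt (2 * Real.pi))⁻¹ * f u :=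
    mul_pos (inv_pos.2 sqrt2pi_pos) (f_pos u)
  positivity

lemma h_strictAntiOn (ξ : ℝ) : StrictAntiOn (h ξ) (Set.Ici ξ) := by
  apply strictAntiOn_of_deriv_neg (convex_Ici ξ) (h_continuous ξ).continuousOn
  intro u hu
  rw [interior_Ici] at hu
  rw [h_deriv]
  have h1 : ξ - u < 0 := sub_neg.2 hu
  have h2 : 0 < (Real.sqrt (2 * Real.pi))⁻¹ * f u :=
    mul_pos (inv_pos.2 sqrt2pi_pos) (f_pos u)
  exact mul_neg_of_neg_of_pos h1 h2

lemma h_tendsto_atBot (ξ : ℝ) : Tendsto (h ξ) atBot (𝓝 0) := by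
  have h1 : Tendsto (fun u => (Real.sqrt (2 * Real.pi))⁻¹ * f u) atBot
      (𝓝 ((Real.sqrt (2 * Real.pi))⁻¹ * 0)) := f_tendsto_atBot.const_mul _
  have h2 : Tendsto (fun u => ξ * ((Real.sqrt (2 * Real.pi))⁻¹ * F u)) atBot
      (𝓝 (ξ * ((Real.sqrt (2 * Real.pi))⁻¹ * 0))) :=
    (F_tendsto_atBot.const_mul _).const_mul ξ
  have h3 := h1.add h2
  have h4 : (Real.sqrt (2 * Real.pi))⁻¹ * 0 +
      ξ * ((Real.sqrt (2 * Real.pi))⁻¹ * 0) = 0 := by ring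
  rwa [h4] at h3

lemma h_tendsto_atTop (ξ : ℝ) : Tendsto (h ξ) atTop (𝓝 ξ) := by
  have h1 : Tendsto (fun u => (Real.sqrt (2 * Real.pi))⁻¹ * f u) atTop
      (𝓝 ((Real.sqrt (2 * Real.pi))⁻¹ * 0)) := f_tendsto_atTop.const_mul _
  have h2 : Tendsto (fun u => ξ * ((Real.sqrt (2 * Real.pi))⁻¹ * F u)) atTop
      (𝓝 (ξ * ((Real.sqrt (2 * Real.pi))⁻¹ * Real.sqrt (2 * Real.pi)))) :=
    (F_tendsto_atTop.const_mul _).const_mul ξ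
  have h3 := h1.add h2
  have : (Real.sqrt (2 * Real.pi))⁻¹ * 0 +
      ξ * ((Real.sqrt (2 * Real.pi))⁻¹ * Real.sqrt (2 * Real.pi)) = ξ := by
    rw [inv_mul_cancel₀ sqrt2pi_pos.ne']
    ring
  rwa [this] at h3

lemma h_pos_of_le (ξ : ℝ) {u : ℝ} (hu : u ≤ ξ) : 0 < h ξ u := by
  have hnonneg : ∀ v ≤ ξ, 0 ≤ h ξ v := by
    intro v hv
    refine le_of_tendsto (h_tendsto_atBot ξ) ?_
    filter_upwards [eventually_le_atBot v] with w hw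
    exact ((h_strictMonoOn ξ).monotoneOn (hw.trans hv) hv hw)
  calc (0:ℝ) ≤ h ξ (u - 1) := hnonneg _ (by linarith)
    _ < h ξ u := (h_strictMonoOn ξ) (by simp; linarith) hu (by linarith)

end GUniqueZeroAux

theorem g_unique_zero (S ξ : ℝ) (hS : 0 < S) (hξ : ξ < 0)
    (g : ℝ → ℝ)
    (hg : ∀ x > 0, g x = (Real.sqrt (2 * Real.pi))⁻¹ *
        Real.exp (-(ξ - (1 / S) * Real.log x) ^ 2 / 2) +
        ξ * stdNormalCDF (ξ - (1 / S) * Real.log x)) :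
    ∃ x₀ ∈ Set.Ioo (0 : ℝ) 1, g x₀ = 0 ∧
      (∀ x ∈ Set.Ioo (0 : ℝ) x₀, g x < 0) ∧
      (∀ x > x₀, 0 < g x) ∧
      ∀ x ∈ Set.Ioo (0 : ℝ) 1, g x = 0 → x = x₀ := by
  open GUniqueZeroAux in
  have hS' : (0:ℝ) < 1 / S := by positivity
  have hξpos : 0 < h ξ ξ := h_pos_of_le ξ le_rfl
  obtain ⟨b, hb1, hb2⟩ := (((h_tendsto_atTop ξ).eventually_lt_const hξ).and
    (eventually_ge_atTop (ξ + 1))).exists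
  have hξb : ξ ≤ b := by linarith
  obtain ⟨u₀, hu₀mem, hu₀⟩ := intermediate_value_Icc' hξb
    (h_continuous ξ).continuousOn ⟨hb1.le, hξpos.le⟩
  have hu₀gt : ξ < u₀ := by
    rcases lt_or_eq_of_le hu₀mem.1 with hlt | heq
    · exact hlt
    · exfalso; rw [← heq] at hu₀; linarith
  set x₀ := Real.exp (S * (ξ - u₀)) with hx₀def
  have hx₀pos : 0 < x₀ := Real.exp_pos _
  have hx₀lt1 : x₀ < 1 :=
    Real.exp_lt_one_iff.2 (mul_neg_of_pos_of_neg hS (by linarith))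
  have hux₀ : ξ - (1 / S) * Real.log x₀ = u₀ := by
    rw [hx₀def, Real.log_exp]
    field_simp
    ring
  have hgh : ∀ x > (0:ℝ), g x = h ξ (ξ - (1 / S) * Real.log x) := by
    intro x hx
    rw [hg x hx, h_eq]
  have humono : ∀ x y : ℝ, 0 < x → x < y →
      ξ - (1 / S) * Real.log y < ξ - (1 / S) * Real.log x := by
    intro x y hx hxy
    have := Real.log_lt_log hx hxy
    nlinarith
  refine ⟨x₀, ⟨hx₀pos, hx₀lt1⟩, ?_, ?_, ?_, ?_⟩
  · rw [hgh x₀ hx₀pos, hux₀, hu₀]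
  · rintro x ⟨hx0, hxlt⟩
    have hu : u₀ < ξ - (1 / S) * Real.log x := by
      have := humono x x₀ hx0 hxlt
      rw [hux₀] at this
      exact this
    rw [hgh x hx0]
    have := h_strictAntiOn ξ hu₀gt.le (le_of_lt (hu₀gt.trans hu)) hu
    rw [hu₀] at this
    exact this
  · intro x hxgt
    have hx0 : 0 < x := hx₀pos.trans hxgt
    have hu : ξ - (1 / S) * Real.log x < u₀ := by
      have := humono x₀ x hx₀pos hxgt
      rw [hux₀] at this
      exact this
    rw [hgh x hx0]
    rcases le_or_gt (ξ - (1 / S) * Real.log x) ξ with hle | hgt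
    · exact h_pos_of_le ξ hle
    · have := h_strictAntiOn ξ hgt.le hu₀gt.le hu
      rw [hu₀] at this
      exact this
  · rintro x ⟨hx0, hx1⟩ hgx
    have hlogneg : Real.log x < 0 := Real.log_neg hx0 hx1
    have hgt : ξ < ξ - (1 / S) * Real.log x := by nlinarith
    have hhx : h ξ (ξ - (1 / S) * Real.log x) = 0 := by
      rw [← hgh x hx0]; exact hgx
    have heq : ξ - (1 / S) * Real.log x = u₀ :=
      (h_strictAntiOn ξ).injOn hgt.le hu₀gt.le (by rw [hhx, hu₀])
    have hlog : Real.log x = Real.log x₀ := by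
      have h1 : (1 / S) * Real.log x = (1 / S) * Real.log x₀ := by linarith [hux₀]
      exact mul_left_cancel₀ (ne_of_gt hS') h1
    rw [← Real.exp_log hx0, hlog, Real.exp_log hx₀pos]
end

section
/- Let σ > 0, c ∈ ℝ, T > 0 and suppose u(x,t) is a twice continuously differentiable (in x), once in t, solution of ∂u/∂t + ½σ²x²∂²u/∂x² + c·x·∂u/∂x = 0 on x > 0, 0 < t < T. Then the image function v(x,t) = x^{1 − 2c/σ²}·u(1/x, t) also satisfies ∂v/∂t + ½σ²x²∂²v/∂x² + c·x·∂v/∂x = 0 on x > 0, 0 < t < T. -/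
open Real Set Filter Topology

theorem image_solution_principle (σ c T : ℝ) (hσ : 0 < σ) (hT : 0 < T)
    (u : ℝ → ℝ → ℝ)
    (hreg_x : ∀ t ∈ Set.Ioo (0 : ℝ) T, ContDiffOn ℝ 2 (fun x => u x t) (Set.Ioi 0))
    (hreg_t : ∀ x > (0 : ℝ), ∀ t ∈ Set.Ioo (0 : ℝ) T, DifferentiableAt ℝ (fun s => u x s) t)
    (hu : ∀ x > 0, ∀ t ∈ Set.Ioo (0 : ℝ) T,
      deriv (fun s => u x s) t +
        (1 / 2) * σ ^ 2 * x ^ 2 * deriv (deriv (fun y => u y t)) x +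
        c * x * deriv (fun y => u y t) x = 0)
    (v : ℝ → ℝ → ℝ)
    (hv : ∀ x > 0, ∀ t ∈ Set.Ioo (0 : ℝ) T,
      v x t = x ^ (1 - 2 * c / σ ^ 2) * u (1 / x) t) :
    ∀ x > 0, ∀ t ∈ Set.Ioo (0 : ℝ) T,
      deriv (fun s => v x s) t +
        (1 / 2) * σ ^ 2 * x ^ 2 * deriv (deriv (fun y => v y t)) x +
        c * x * deriv (fun y => v y t) x = 0 := by
  intro x hx t ht
  have hσ2 : σ ^ 2 ≠ 0 := pow_ne_zero 2 (ne_of_gt hσ)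
  have hx0 : x ≠ 0 := ne_of_gt hx
  have hxinv : (0:ℝ) < x⁻¹ := inv_pos.mpr hx
  set α : ℝ := 1 - 2 * c / σ ^ 2 with hα
  set f : ℝ → ℝ := fun y => u y t with hfdef
  have hfC : ContDiffOn ℝ 2 f (Set.Ioi 0) := hreg_x t ht
  have hfd : ∀ y ∈ Set.Ioi (0:ℝ), DifferentiableAt ℝ f y := fun y hy =>
    (hfC.contDiffAt (isOpen_Ioi.mem_nhds hy)).differentiableAt (by norm_num)
  have hf'C : ContDiffOn ℝ 1 (deriv f) (Set.Ioi 0) := by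
    exact hfC.deriv_of_isOpen (m := 1) isOpen_Ioi (by norm_num)
  have hf'd : ∀ y ∈ Set.Ioi (0:ℝ), DifferentiableAt ℝ (deriv f) y := fun y hy =>
    (hf'C.contDiffAt (isOpen_Ioi.mem_nhds hy)).differentiableAt (by norm_num)
  -- time derivative
  have hvt : deriv (fun s => v x s) t = x ^ α * deriv (fun s => u x⁻¹ s) t := by
    have hev : (fun s => v x s) =ᶠ[𝓝 t] fun s => x ^ α * u x⁻¹ s := by
      filter_upwards [isOpen_Ioo.mem_nhds ht] with s hs
      rw [hv x hx s hs, one_div]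
    rw [hev.deriv_eq]
    exact deriv_const_mul _ (hreg_t x⁻¹ hxinv t ht)
  -- the image function in space
  set g : ℝ → ℝ := fun y => y ^ α * f y⁻¹ with hgdef
  have hveq : ∀ y ∈ Set.Ioi (0:ℝ), v y t = g y := by
    intro y hy
    simp only [hgdef]
    rw [hv y hy t ht, one_div]
  have hgd : ∀ y ∈ Set.Ioi (0:ℝ), HasDerivAt g
      (α * y ^ (α - 1) * f y⁻¹ + y ^ α * (deriv f y⁻¹ * -(y ^ 2)⁻¹)) y := by
    intro y hy
    have hy0 : y ≠ 0 := ne_of_gt hy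
    have hy' : y⁻¹ ∈ Set.Ioi (0:ℝ) := Set.mem_Ioi.mpr (inv_pos.mpr hy)
    have h1 : HasDerivAt (fun z : ℝ => z ^ α) (α * y ^ (α - 1)) y :=
      Real.hasDerivAt_rpow_const (Or.inl hy0)
    have h2 : HasDerivAt (fun z : ℝ => f z⁻¹) (deriv f y⁻¹ * -(y ^ 2)⁻¹) y :=
      (hfd _ hy').hasDerivAt.comp y (hasDerivAt_inv hy0)
    exact h1.mul h2
  have hderiv_eq : ∀ y ∈ Set.Ioi (0:ℝ), deriv (fun z => v z t) y =
      α * y ^ (α - 1) * f y⁻¹ + y ^ α * (deriv f y⁻¹ * -(y ^ 2)⁻¹) := by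
    intro y hy
    have hev : (fun z => v z t) =ᶠ[𝓝 y] g := by
      filter_upwards [isOpen_Ioi.mem_nhds hy] with z hz using hveq z hz
    rw [hev.deriv_eq, (hgd y hy).deriv]
  -- second spatial derivative
  have h1x : HasDerivAt (fun z : ℝ => z ^ α) (α * x ^ (α - 1)) x :=
    Real.hasDerivAt_rpow_const (Or.inl hx0)
  have hxmem : x ∈ Set.Ioi (0:ℝ) := hx
  have hxinvmem : x⁻¹ ∈ Set.Ioi (0:ℝ) := hxinv
  have h2x : HasDerivAt (fun z : ℝ => f z⁻¹) (deriv f x⁻¹ * -(x ^ 2)⁻¹) x :=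
    (hfd _ hxinvmem).hasDerivAt.comp x (hasDerivAt_inv hx0)
  have hBx : HasDerivAt (fun z : ℝ => deriv f z⁻¹)
      (deriv (deriv f) x⁻¹ * -(x ^ 2)⁻¹) x :=
    (hf'd _ hxinvmem).hasDerivAt.comp x (hasDerivAt_inv hx0)
  have hCx : HasDerivAt (fun z : ℝ => -(z ^ 2)⁻¹)
      (-(-(↑(2:ℕ) * x ^ (2-1)) / (x ^ 2) ^ 2)) x :=
    ((hasDerivAt_pow 2 x).inv (pow_ne_zero 2 hx0)).neg
  have h1'x : HasDerivAt (fun z : ℝ => α * z ^ (α - 1))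
      (α * ((α - 1) * x ^ (α - 1 - 1))) x :=
    (Real.hasDerivAt_rpow_const (Or.inl hx0)).const_mul α
  have hG1 : HasDerivAt
      (fun y : ℝ => α * y ^ (α - 1) * f y⁻¹ + y ^ α * (deriv f y⁻¹ * -(y ^ 2)⁻¹))
      (α * ((α - 1) * x ^ (α - 1 - 1)) * f x⁻¹
        + α * x ^ (α - 1) * (deriv f x⁻¹ * -(x ^ 2)⁻¹)
        + (α * x ^ (α - 1) * (deriv f x⁻¹ * -(x ^ 2)⁻¹)
          + x ^ α * (deriv (deriv f) x⁻¹ * -(x ^ 2)⁻¹ * -(x ^ 2)⁻¹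
            + deriv f x⁻¹ * -(-(↑(2:ℕ) * x ^ (2-1)) / (x ^ 2) ^ 2)))) x :=
    (h1'x.mul h2x).add (h1x.mul (hBx.mul hCx))
  have hv2 : deriv (deriv (fun z => v z t)) x =
      α * ((α - 1) * x ^ (α - 1 - 1)) * f x⁻¹
        + α * x ^ (α - 1) * (deriv f x⁻¹ * -(x ^ 2)⁻¹)
        + (α * x ^ (α - 1) * (deriv f x⁻¹ * -(x ^ 2)⁻¹)
          + x ^ α * (deriv (deriv f) x⁻¹ * -(x ^ 2)⁻¹ * -(x ^ 2)⁻¹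
            + deriv f x⁻¹ * -(-(↑(2:ℕ) * x ^ (2-1)) / (x ^ 2) ^ 2))) := by
    have hev2 : deriv (fun z => v z t) =ᶠ[𝓝 x]
        fun y => α * y ^ (α - 1) * f y⁻¹ + y ^ α * (deriv f y⁻¹ * -(y ^ 2)⁻¹) := by
      filter_upwards [isOpen_Ioi.mem_nhds hxmem] with z hz using hderiv_eq z hz
    rw [hev2.deriv_eq, hG1.deriv]
  -- the PDE at the reflected point
  have hupde := hu x⁻¹ hxinv t ht
  have hut : deriv (fun s => u x⁻¹ s) t =
      -((1 / 2) * σ ^ 2 * (x⁻¹) ^ 2 * deriv (deriv f) x⁻¹ + c * x⁻¹ * deriv f x⁻¹) := by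
    have : deriv (fun y => u y t) = deriv f := rfl
    rw [this] at hupde
    linarith
  -- rpow identities
  have e1 : x ^ (α - 1) = x ^ α / x := by
    rw [Real.rpow_sub hx, Real.rpow_one]
  have e2 : x ^ (α - 1 - 1) = x ^ α / x / x := by
    rw [Real.rpow_sub hx, Real.rpow_sub hx, Real.rpow_one]
  rw [hvt, hv2, hderiv_eq x hxmem, hut, e1, e2]
  have hA : (0:ℝ) < x ^ α := Real.rpow_pos_of_pos hx α
  rw [hα]
  field_simp
  ring
end

section
/- Let r, q, σ, a, b, R, T satisfy σ > 0, b > 0, 0 ≤ R < 1, T > 0, and for 0 ≤ t < T and V > b·e^{−a(T−t)} define B(V,t) = R·e^{−r(T−t)} + (1 − R)·e^{−r(T−t)}·W(V,t), where W(V,t) = N(d₁) − (V/(b e^{−a(T−t)}))^{1 − 2(r−q−a)/σ²}·N(d₂), with d₁ = (ln(V/b) + (r−q−σ²/2)(T−t))/(σ√(T−t)) and d₂ = (ln(b/V) + (r−q−2a−σ²/2)(T−t))/(σ√(T−t)). Then for all V > b·e^{−a(T−t)}: ∂B/∂V(V,t) > 0 and R·e^{−r(T−t)} < B(V,t) < e^{−r(T−t)}.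 -/
open Real Set Filter Topology

open MeasureTheory

namespace CBaux

noncomputable def phi (x : ℝ) : ℝ := (Real.sqrt (2 * Real.pi))⁻¹ * Real.exp (-x ^ 2 / 2)

lemma sqrt2pi_pos : 0 < Real.sqrt (2 * Real.pi) := Real.sqrt_pos.2 (by positivity)

lemma phi_pos (x : ℝ) : 0 < phi x := mul_pos (inv_pos.2 sqrt2pi_pos) (Real.exp_pos _)

lemma gauss_cont : Continuous (fun t : ℝ => Real.exp (-t ^ 2 / 2)) := by fun_prop

lemma gauss_integrable : Integrable (fun t : ℝ => Real.exp (-t ^ 2 / 2)) := by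
  have h := integrable_exp_neg_mul_sq (b := (1:ℝ)/2) (by norm_num)
  simpa only [show ∀ t:ℝ, -(1/2:ℝ)*t^2 = -t^2/2 from fun t => by ring] using h

lemma tgauss_integrable : Integrable (fun t : ℝ => -t * Real.exp (-t ^ 2 / 2)) := by
  have h := (integrable_mul_exp_neg_mul_sq (b := (1:ℝ)/2) (by norm_num)).neg
  have heq : (fun t : ℝ => -t * Real.exp (-t ^ 2 / 2))
      = fun t : ℝ => -(t * Real.exp (-(1/2:ℝ) * t ^ 2)) := by
    funext t; rw [show -(1/2:ℝ)*t^2 = -t^2/2 by ring]; ring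
  rw [heq]; exact h

lemma hasDerivAt_gauss (t : ℝ) :
    HasDerivAt (fun t : ℝ => Real.exp (-t ^ 2 / 2)) (-t * Real.exp (-t ^ 2 / 2)) t := by
  have h : HasDerivAt (fun t : ℝ => -t ^ 2 / 2) (-t) t := by
    have h2 := ((hasDerivAt_pow 2 t).neg).div_const 2
    have heq : -((2:ℕ) * t ^ (2-1) : ℝ) / 2 = -t := by push_cast; ring
    rw [heq] at h2; exact h2
  have := h.exp
  rw [mul_comm] at this; exact this

lemma gauss_tendsto_zero :
    Tendsto (fun t : ℝ => Real.exp (-t ^ 2 / 2)) atBot (𝓝 0) := by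
  apply Real.tendsto_exp_atBot.comp
  have h1 : Tendsto (fun t : ℝ => t ^ 2) atBot atTop :=
    ((tendsto_pow_atTop (n := 2) (by norm_num)).comp
      (tendsto_neg_atBot_atTop : Tendsto (fun x : ℝ => -x) atBot atTop)).congr (fun t => by simp [Function.comp])
  have h2 : Tendsto (fun t : ℝ => t ^ 2 / 2) atBot atTop := h1.atTop_div_const (by norm_num)
  exact (tendsto_neg_atTop_atBot.comp h2).congr (fun t => by simp [Function.comp]; ring)

lemma integral_tgauss (y : ℝ) :
    ∫ t in Iic y, -t * Real.exp (-t ^ 2 / 2) = Real.exp (-y ^ 2 / 2) := by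
  have h := integral_Iic_of_hasDerivAt_of_tendsto' (a := y)
    (f := fun t : ℝ => Real.exp (-t ^ 2 / 2))
    (f' := fun t : ℝ => -t * Real.exp (-t ^ 2 / 2))
    (fun x _ => hasDerivAt_gauss x) tgauss_integrable.integrableOn gauss_tendsto_zero
  simpa using h

lemma hasDerivAt_cdf (x : ℝ) : HasDerivAt stdNormalCDF (phi x) x := by
  have hint := gauss_integrable
  have heq : (fun y : ℝ => ∫ t in Iic y, Real.exp (-t ^ 2 / 2)) =
      fun y => (∫ t in Iic (0:ℝ), Real.exp (-t ^ 2 / 2)) + ∫ t in (0:ℝ)..y, Real.exp (-t ^ 2 / 2) := by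
    funext y
    rw [← intervalIntegral.integral_Iic_sub_Iic hint.integrableOn hint.integrableOn]
    ring
  have h2 : HasDerivAt (fun y : ℝ => ∫ t in (0:ℝ)..y, Real.exp (-t ^ 2 / 2))
      (Real.exp (-x ^ 2 / 2)) x :=
    intervalIntegral.integral_hasDerivAt_right (hint.intervalIntegrable)
      (gauss_cont.stronglyMeasurableAtFilter _ _) gauss_cont.continuousAt
  have h3 : HasDerivAt (fun y : ℝ => ∫ t in Iic y, Real.exp (-t ^ 2 / 2))
      (Real.exp (-x ^ 2 / 2)) x := by
    rw [heq]; exact h2.const_add _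
  exact h3.const_mul ((Real.sqrt (2 * Real.pi))⁻¹)

lemma cdf_pos (x : ℝ) : 0 < stdNormalCDF x := by
  unfold stdNormalCDF
  refine mul_pos (inv_pos.2 sqrt2pi_pos) ?_
  rw [setIntegral_pos_iff_support_of_nonneg_ae]
  · have hs : Function.support (fun t : ℝ => Real.exp (-t ^ 2 / 2)) = univ := by
      ext t; simp [Function.mem_support, (Real.exp_pos _).ne']
    rw [hs, univ_inter, Real.volume_Iic]
    exact ENNReal.zero_lt_top
  · exact Filter.Eventually.of_forall fun t => (Real.exp_pos _).le
  · exact gauss_integrable.integrableOn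

lemma integral_gauss_total : ∫ t : ℝ, Real.exp (-t ^ 2 / 2) = Real.sqrt (2 * Real.pi) := by
  have h := integral_gaussian ((1:ℝ)/2)
  simp only [show ∀ t:ℝ, -(1/2:ℝ)*t^2 = -t^2/2 from fun t => by ring] at h
  rw [h]; congr 1; rw [div_div_eq_mul_div, div_one]; ring

lemma cdf_lt_one (x : ℝ) : stdNormalCDF x < 1 := by
  unfold stdNormalCDF
  have hlt : (∫ t in Iic x, Real.exp (-t ^ 2 / 2)) < Real.sqrt (2 * Real.pi) := by
    rw [← integral_gauss_total, ← intervalIntegral.integral_Iic_add_Ioi (b := x)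
      gauss_integrable.integrableOn gauss_integrable.integrableOn]
    have hpos : 0 < ∫ t in Ioi x, Real.exp (-t ^ 2 / 2) := by
      rw [setIntegral_pos_iff_support_of_nonneg_ae]
      · have hs : Function.support (fun t : ℝ => Real.exp (-t ^ 2 / 2)) = univ := by
          ext t; simp [Function.mem_support, (Real.exp_pos _).ne']
        rw [hs, univ_inter, Real.volume_Ioi]
        exact ENNReal.zero_lt_top
      · exact Filter.Eventually.of_forall fun t => (Real.exp_pos _).le
      · exact gauss_integrable.integrableOn
    linarith
  calc (Real.sqrt (2 * Real.pi))⁻¹ * ∫ t in Iic x, Real.exp (-t ^ 2 / 2)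
      < (Real.sqrt (2 * Real.pi))⁻¹ * Real.sqrt (2 * Real.pi) :=
        mul_lt_mul_of_pos_left hlt (inv_pos.2 sqrt2pi_pos)
    _ = 1 := inv_mul_cancel₀ sqrt2pi_pos.ne'

lemma mills (y : ℝ) : 0 < phi y + y * stdNormalCDF y := by
  rcases le_or_gt 0 y with hy | hy
  · exact add_pos_of_pos_of_nonneg (phi_pos y) (mul_nonneg hy (cdf_pos y).le)
  · have hint1 : IntegrableOn (fun t : ℝ => -t * Real.exp (-t ^ 2 / 2)) (Iic y) :=
      tgauss_integrable.integrableOn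
    have hint2 : IntegrableOn (fun t : ℝ => y * Real.exp (-t ^ 2 / 2)) (Iic y) :=
      (gauss_integrable.const_mul y).integrableOn
    have key : phi y + y * stdNormalCDF y =
        (Real.sqrt (2 * Real.pi))⁻¹ *
          ∫ t in Iic y, (-t * Real.exp (-t ^ 2 / 2) + y * Real.exp (-t ^ 2 / 2)) := by
      rw [integral_add hint1 hint2, integral_tgauss, integral_const_mul]
      unfold phi stdNormalCDF
      ring
    rw [key]
    refine mul_pos (inv_pos.2 sqrt2pi_pos) ?_
    rw [setIntegral_pos_iff_support_of_nonneg_ae]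
    · refine lt_of_lt_of_le ?_ (measure_mono (?_ : Iio y ⊆ _))
      · rw [Real.volume_Iio]; exact ENNReal.zero_lt_top
      · intro u hu
        simp only [mem_Iio] at hu
        refine mem_inter ?_ (le_of_lt hu)
        simp only [Function.mem_support]
        have hpos : 0 < (-u + y) * Real.exp (-u ^ 2 / 2) :=
          mul_pos (by linarith) (Real.exp_pos _)
        intro hcon
        rw [show -u * Real.exp (-u ^ 2 / 2) + y * Real.exp (-u ^ 2 / 2)
          = (-u + y) * Real.exp (-u ^ 2 / 2) by ring] at hcon
        exact hpos.ne' hcon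
    · rw [EventuallyLE, ae_restrict_iff' measurableSet_Iic]
      refine Filter.Eventually.of_forall fun u hu => ?_
      simp only [mem_Iic] at hu
      have h0 : 0 ≤ (-u + y) * Real.exp (-u ^ 2 / 2) :=
        mul_nonneg (by linarith) (Real.exp_pos _).le
      show (0:ℝ) ≤ -u * Real.exp (-u ^ 2 / 2) + y * Real.exp (-u ^ 2 / 2)
      nlinarith
    · exact hint1.add hint2

end CBaux

namespace CB
open CBaux

noncomputable def d1 (r q σ a b T t V : ℝ) : ℝ :=
  (Real.log V - Real.log b + (r - q - σ ^ 2 / 2) * (T - t)) / (σ * Real.sqrt (T - t))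

noncomputable def d2 (r q σ a b T t V : ℝ) : ℝ :=
  (Real.log b - Real.log V + (r - q - 2 * a - σ ^ 2 / 2) * (T - t)) / (σ * Real.sqrt (T - t))

noncomputable def c0 (r q σ a b T t V : ℝ) : ℝ :=
  Real.exp ((1 - 2 * (r - q - a) / σ ^ 2) * (Real.log V - Real.log b + a * (T - t)))

noncomputable def F (r q σ a b T t V : ℝ) : ℝ :=
  stdNormalCDF (d1 r q σ a b T t V) - c0 r q σ a b T t V * stdNormalCDF (d2 r q σ a b T t V)

noncomputable def F' (r q σ a b T t V : ℝ) : ℝ :=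
  phi (d1 r q σ a b T t V) * (V⁻¹ / (σ * Real.sqrt (T - t))) -
    ((c0 r q σ a b T t V * ((1 - 2 * (r - q - a) / σ ^ 2) * V⁻¹)) * stdNormalCDF (d2 r q σ a b T t V) +
      c0 r q σ a b T t V * (phi (d2 r q σ a b T t V) * (-V⁻¹ / (σ * Real.sqrt (T - t)))))

lemma c0_pos (r q σ a b T t V : ℝ) : 0 < c0 r q σ a b T t V := Real.exp_pos _

lemma hasDerivAt_F (r q σ a b T t V : ℝ) (hV : 0 < V) :
    HasDerivAt (fun x => F r q σ a b T t x) (F' r q σ a b T t V) V := by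
  have hlog : HasDerivAt Real.log V⁻¹ V := Real.hasDerivAt_log hV.ne'
  have hd1 : HasDerivAt (fun x => d1 r q σ a b T t x) (V⁻¹ / (σ * Real.sqrt (T - t))) V := by
    unfold d1
    exact ((hlog.sub_const (Real.log b)).add_const _).div_const _
  have hd2 : HasDerivAt (fun x => d2 r q σ a b T t x) (-V⁻¹ / (σ * Real.sqrt (T - t))) V := by
    unfold d2
    exact ((hlog.const_sub (Real.log b)).add_const _).div_const _
  have hc0 : HasDerivAt (fun x => c0 r q σ a b T t x)
      (c0 r q σ a b T t V * ((1 - 2 * (r - q - a) / σ ^ 2) * V⁻¹)) V := by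
    unfold c0
    exact (((hlog.sub_const (Real.log b)).add_const _).const_mul _).exp
  have hN1 : HasDerivAt (fun x => stdNormalCDF (d1 r q σ a b T t x))
      (phi (d1 r q σ a b T t V) * (V⁻¹ / (σ * Real.sqrt (T - t)))) V :=
    (hasDerivAt_cdf _).comp V hd1
  have hN2 : HasDerivAt (fun x => stdNormalCDF (d2 r q σ a b T t x))
      (phi (d2 r q σ a b T t V) * (-V⁻¹ / (σ * Real.sqrt (T - t)))) V :=
    (hasDerivAt_cdf _).comp V hd2
  exact hN1.sub (hc0.mul hN2)

lemma phi_rel (r q σ a b T t V : ℝ) (hσ : 0 < σ) (hT : 0 < T - t) :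
    phi (d1 r q σ a b T t V) =
      c0 r q σ a b T t V * phi (d2 r q σ a b T t V) := by
  obtain ⟨u, hu, huq⟩ : ∃ u : ℝ, 0 < u ∧ T - t = u ^ 2 :=
    ⟨Real.sqrt (T - t), Real.sqrt_pos.2 hT, (Real.sq_sqrt hT.le).symm⟩
  have hid : (d2 r q σ a b T t V) ^ 2 - (d1 r q σ a b T t V) ^ 2 =
      2 * ((1 - 2 * (r - q - a) / σ ^ 2) * (Real.log V - Real.log b + a * (T - t))) := by
    unfold d1 d2
    rw [huq, Real.sqrt_sq hu.le]
    field_simp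
    ring
  unfold phi c0
  rw [show Real.exp ((1 - 2 * (r - q - a) / σ ^ 2) * (Real.log V - Real.log b + a * (T - t))) *
      ((Real.sqrt (2 * Real.pi))⁻¹ * Real.exp (-(d2 r q σ a b T t V) ^ 2 / 2)) =
      (Real.sqrt (2 * Real.pi))⁻¹ *
        Real.exp ((1 - 2 * (r - q - a) / σ ^ 2) * (Real.log V - Real.log b + a * (T - t)) +
          -(d2 r q σ a b T t V) ^ 2 / 2) by rw [Real.exp_add]; ring]
  congr 1
  rw [Real.exp_eq_exp]
  linarith [hid]

lemma F'_pos (r q σ a b T t V : ℝ) (hσ : 0 < σ) (hb : 0 < b) (hT : 0 < T - t)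
    (hV : b * Real.exp (-a * (T - t)) < V) : 0 < F' r q σ a b T t V := by
  have hVb0 : 0 < b * Real.exp (-a * (T - t)) := mul_pos hb (Real.exp_pos _)
  have hV0 : 0 < V := hVb0.trans hV
  have hsτ : 0 < Real.sqrt (T - t) := Real.sqrt_pos.2 hT
  have hs : 0 < σ * Real.sqrt (T - t) := mul_pos hσ hsτ
  have hM : 0 < Real.log V - Real.log b + a * (T - t) := by
    have h1 : Real.log (b * Real.exp (-a * (T - t))) < Real.log V := Real.log_lt_log hVb0 hV
    rw [Real.log_mul hb.ne' (Real.exp_ne_zero _), Real.log_exp] at h1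
    linarith
  set y := d2 r q σ a b T t V with hy
  have hmills := mills y
  have hNy := cdf_pos y
  have hphiy := phi_pos y
  -- (u - y) where u = -(β s)/2
  have hgap : (-( (1 - 2 * (r - q - a) / σ ^ 2) * (σ * Real.sqrt (T - t))) / 2 - y) =
      (Real.log V - Real.log b + a * (T - t)) / (σ * Real.sqrt (T - t)) := by
    obtain ⟨u, hu, huq⟩ : ∃ u : ℝ, 0 < u ∧ T - t = u ^ 2 :=
      ⟨Real.sqrt (T - t), hsτ, (Real.sq_sqrt hT.le).symm⟩
    rw [hy]; unfold d2
    rw [huq, Real.sqrt_sq hu.le]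
    field_simp
    ring
  have hkey : 0 < 2 * phi y - (1 - 2 * (r - q - a) / σ ^ 2) * (σ * Real.sqrt (T - t)) *
      stdNormalCDF y := by
    have hprod : 0 < ((Real.log V - Real.log b + a * (T - t)) / (σ * Real.sqrt (T - t))) *
        stdNormalCDF y := mul_pos (div_pos hM hs) hNy
    rw [← hgap] at hprod
    nlinarith [hmills, hprod]
  have hval : F' r q σ a b T t V = c0 r q σ a b T t V * V⁻¹ / (σ * Real.sqrt (T - t)) *
      (2 * phi y - (1 - 2 * (r - q - a) / σ ^ 2) * (σ * Real.sqrt (T - t)) * stdNormalCDF y) := by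
    unfold F'
    rw [phi_rel r q σ a b T t V hσ hT, ← hy]
    field_simp
    ring
  rw [hval]
  exact mul_pos (div_pos (mul_pos (c0_pos r q σ a b T t V) (inv_pos.2 hV0)) hs) hkey

lemma F_barrier (r q σ a b T t V : ℝ) (hb : 0 < b) : F r q σ a b T t (b * Real.exp (-a * (T - t))) = 0 := by
  have hlog : Real.log (b * Real.exp (-a * (T - t))) = Real.log b + (-a * (T - t)) := by
    rw [Real.log_mul hb.ne' (Real.exp_ne_zero _), Real.log_exp]
  unfold F d1 d2 c0
  rw [hlog]
  rw [show Real.log b + -a * (T - t) - Real.log b + (r - q - σ ^ 2 / 2) * (T - t) =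
      Real.log b - (Real.log b + -a * (T - t)) + (r - q - 2 * a - σ ^ 2 / 2) * (T - t) by ring,
    show Real.log b + -a * (T - t) - Real.log b + a * (T - t) = 0 by ring]
  simp

end CB
theorem credit_bond_monotone_and_bounds (r q σ a b R T : ℝ)
    (hσ : 0 < σ) (hb : 0 < b) (hR0 : 0 ≤ R) (hR1 : R < 1) (hT : 0 < T)
    (W B : ℝ → ℝ → ℝ)
    (hW : ∀ t, 0 ≤ t → t < T → ∀ V > b * Real.exp (-a * (T - t)),
      W V t = stdNormalCDF ((Real.log (V / b) + (r - q - σ ^ 2 / 2) * (T - t)) / (σ * Real.sqrt (T - t))) -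
        (V / (b * Real.exp (-a * (T - t)))) ^ (1 - 2 * (r - q - a) / σ ^ 2) *
          stdNormalCDF ((Real.log (b / V) + (r - q - 2 * a - σ ^ 2 / 2) * (T - t)) / (σ * Real.sqrt (T - t))))
    (hB : ∀ t, 0 ≤ t → t < T → ∀ V > b * Real.exp (-a * (T - t)),
      B V t = R * Real.exp (-r * (T - t)) + (1 - R) * Real.exp (-r * (T - t)) * W V t) :
    ∀ t, 0 ≤ t → t < T → ∀ V > b * Real.exp (-a * (T - t)),
      0 < deriv (fun V => B V t) V ∧
      R * Real.exp (-r * (T - t)) < B V t ∧ B V t < Real.exp (-r * (T - t)) := by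
  intro t ht0 htT V hV
  have hτ : 0 < T - t := sub_pos.2 htT
  have hVb0 : 0 < b * Real.exp (-a * (T - t)) := mul_pos hb (Real.exp_pos _)
  have hV0 : 0 < V := hVb0.trans hV
  have hexp : 0 < Real.exp (-r * (T - t)) := Real.exp_pos _
  have h1R : 0 < 1 - R := sub_pos.2 hR1
  -- W equals F on the region
  have hWF : ∀ x, b * Real.exp (-a * (T - t)) < x → W x t = CB.F r q σ a b T t x := by
    intro x hx
    have hx0 : 0 < x := hVb0.trans hx
    rw [hW t ht0 htT x hx]
    unfold CB.F CB.d1 CB.d2 CB.c0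
    rw [Real.log_div hx0.ne' hb.ne', Real.log_div hb.ne' hx0.ne',
      Real.rpow_def_of_pos (div_pos hx0 hVb0),
      Real.log_div hx0.ne' hVb0.ne', Real.log_mul hb.ne' (Real.exp_ne_zero _), Real.log_exp]
    congr 2
    ring
  have hBF : ∀ x, b * Real.exp (-a * (T - t)) < x →
      B x t = R * Real.exp (-r * (T - t)) +
        (1 - R) * Real.exp (-r * (T - t)) * CB.F r q σ a b T t x := by
    intro x hx
    rw [hB t ht0 htT x hx, hWF x hx]
  -- strict monotonicity of F on [Vb, ∞)
  have hmono : StrictMonoOn (CB.F r q σ a b T t) (Ici (b * Real.exp (-a * (T - t)))) := by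
    apply strictMonoOn_of_deriv_pos (convex_Ici _)
    · intro x hx
      exact ((CB.hasDerivAt_F r q σ a b T t x (hVb0.trans_le hx)).continuousAt).continuousWithinAt
    · intro x hx
      rw [interior_Ici] at hx
      rw [(CB.hasDerivAt_F r q σ a b T t x (hVb0.trans hx)).deriv]
      exact CB.F'_pos r q σ a b T t x hσ hb hτ hx
  have hF0 : 0 < CB.F r q σ a b T t V := by
    have h := hmono (Set.mem_Ici.2 le_rfl) (le_of_lt hV : b * Real.exp (-a * (T - t)) ≤ V) hV
    rwa [CB.F_barrier r q σ a b T t V hb] at h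
  have hF1 : CB.F r q σ a b T t V < 1 := by
    have h1 := CBaux.cdf_lt_one (CB.d1 r q σ a b T t V)
    have h2 := mul_pos (CB.c0_pos r q σ a b T t V) (CBaux.cdf_pos (CB.d2 r q σ a b T t V))
    unfold CB.F
    linarith
  refine ⟨?_, ?_, ?_⟩
  · have hev : (fun x => B x t) =ᶠ[𝓝 V]
        (fun x => R * Real.exp (-r * (T - t)) +
          (1 - R) * Real.exp (-r * (T - t)) * CB.F r q σ a b T t x) :=
      eventually_of_mem (isOpen_Ioi.mem_nhds hV) (fun x hx => hBF x hx)
    rw [hev.deriv_eq]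
    have hd := (((CB.hasDerivAt_F r q σ a b T t V hV0).const_mul
      ((1 - R) * Real.exp (-r * (T - t)))).const_add (R * Real.exp (-r * (T - t))))
    rw [hd.deriv]
    exact mul_pos (mul_pos h1R hexp) (CB.F'_pos r q σ a b T t V hσ hb hτ hV)
  · rw [hBF V hV]
    nlinarith [mul_pos (mul_pos h1R hexp) hF0]
  · rw [hBF V hV]
    nlinarith [mul_pos (mul_pos h1R hexp) (sub_pos.2 hF1)]
end

section
/- Fix S > 0, ξ < 0, and let x₀ ∈ (0,1) be the unique zero of g(x) = (1/√(2π))·exp(−(ξ − (1/S)ln x)²/2) + ξ·N(ξ − (1/S)ln x). Define f(x) = N(ξ + (1/S)ln x) − x^{−2ξ/S}·N(ξ − (1/S)ln x). Then f is strictly decreasing on (0, x₀) and strictly increasing on (x₀, +∞); in particular f(x) < 0 for x ∈ (0,1) and f(x) > 0 for x > 1. -/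
open Real Set Filter Topology

open MeasureTheory intervalIntegral

namespace SN

lemma gauss_eq (t : ℝ) : Real.exp (-t ^ 2 / 2) = Real.exp (-(1/2 : ℝ) * t ^ 2) := by
  ring_nf

lemma integrable_gauss : Integrable (fun t : ℝ => Real.exp (-t ^ 2 / 2)) := by
  simpa only [← gauss_eq] using integrable_exp_neg_mul_sq (by norm_num : (0:ℝ) < 1/2)

lemma integral_gauss : ∫ t : ℝ, Real.exp (-t ^ 2 / 2) = Real.sqrt (2 * Real.pi) := by
  have := integral_gaussian (1/2)
  simp only [← gauss_eq] at this
  rw [this]; norm_num [mul_comm]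

lemma cpos : 0 < (Real.sqrt (2 * Real.pi))⁻¹ := by
  positivity

lemma cdf_pos (x : ℝ) : 0 < stdNormalCDF x := by
  refine mul_pos cpos ?_
  refine (setIntegral_pos_iff_support_of_nonneg_ae ?_ ?_).2 ?_
  · exact Filter.Eventually.of_forall fun t => (Real.exp_pos _).le
  · exact integrable_gauss.integrableOn
  · have hs : (Function.support fun t : ℝ => Real.exp (-t ^ 2 / 2)) = univ := by
      ext t; simp [Function.support, Real.exp_ne_zero]
    rw [hs, univ_inter]
    simp

lemma setInt_le (x : ℝ) : ∫ t in Set.Iic x, Real.exp (-t ^ 2 / 2) ≤ Real.sqrt (2 * Real.pi) := by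
  rw [← integral_gauss]
  exact setIntegral_le_integral integrable_gauss
    (Filter.Eventually.of_forall fun t => (Real.exp_pos _).le)

lemma cdf_le_one (x : ℝ) : stdNormalCDF x ≤ 1 := by
  have h := setInt_le x
  have hc := cpos
  rw [stdNormalCDF]
  calc (Real.sqrt (2 * Real.pi))⁻¹ * ∫ t in Set.Iic x, Real.exp (-t ^ 2 / 2)
      ≤ (Real.sqrt (2 * Real.pi))⁻¹ * Real.sqrt (2 * Real.pi) := by
        exact mul_le_mul_of_nonneg_left h hc.le
    _ = 1 := inv_mul_cancel₀ (by positivity)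

lemma hasDerivAt_cdf (x : ℝ) :
    HasDerivAt stdNormalCDF ((Real.sqrt (2 * Real.pi))⁻¹ * Real.exp (-x ^ 2 / 2)) x := by
  have key : ∀ y : ℝ, stdNormalCDF y =
      (Real.sqrt (2 * Real.pi))⁻¹ * ((∫ t in Set.Iic (0:ℝ), Real.exp (-t ^ 2 / 2)) +
        ∫ t in (0:ℝ)..y, Real.exp (-t ^ 2 / 2)) := by
    intro y
    rw [stdNormalCDF]
    congr 1
    rw [← integral_Iic_sub_Iic integrable_gauss.integrableOn integrable_gauss.integrableOn]
    ring
  have hd : HasDerivAt (fun y => ∫ t in (0:ℝ)..y, Real.exp (-t ^ 2 / 2))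
      (Real.exp (-x ^ 2 / 2)) x := by
    refine intervalIntegral.integral_hasDerivAt_right
      (integrable_gauss.intervalIntegrable) ?_ (by fun_prop)
    exact integrable_gauss.1.stronglyMeasurableAtFilter
  have := ((hd.const_add (∫ t in Set.Iic (0:ℝ), Real.exp (-t ^ 2 / 2))).const_mul
    ((Real.sqrt (2 * Real.pi))⁻¹))
  refine HasDerivAt.congr_of_eventuallyEq ?_ (Filter.Eventually.of_forall key)
  simpa using this

lemma hasDerivAt_gauss (t : ℝ) :
    HasDerivAt (fun t : ℝ => Real.exp (-t ^ 2 / 2)) (-t * Real.exp (-t ^ 2 / 2)) t := by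
  have h1 : HasDerivAt (fun t : ℝ => -t ^ 2 / 2) (-t) t := by
    have := ((hasDerivAt_pow 2 t)).neg.div_const 2
    refine this.congr_deriv ?_
    norm_num
    ring
  simpa [mul_comm] using h1.exp

lemma tendsto_gauss_atBot :
    Tendsto (fun t : ℝ => Real.exp (-t ^ 2 / 2)) atBot (𝓝 0) := by
  apply Real.tendsto_exp_atBot.comp
  have h : Tendsto (fun t : ℝ => t ^ 2) atBot atTop := by
    have := (tendsto_pow_atTop (two_ne_zero)).comp (tendsto_abs_atBot_atTop (G := ℝ))
    refine this.congr fun t => ?_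
    simp [Function.comp, sq_abs]
  have := (tendsto_neg_atTop_atBot.comp h).atBot_div_const (by norm_num : (0:ℝ) < 2)
  simpa [Function.comp, neg_div] using this

lemma integrable_t_gauss : Integrable (fun t : ℝ => -t * Real.exp (-t ^ 2 / 2)) := by
  have := (integrable_mul_exp_neg_mul_sq (by norm_num : (0:ℝ) < 1/2)).neg
  refine this.congr ?_
  refine Filter.Eventually.of_forall fun t => ?_
  simp only [Pi.neg_apply, ← gauss_eq]
  ring

lemma int_neg_t_gauss (u : ℝ) :
    ∫ t in Set.Iic u, -t * Real.exp (-t ^ 2 / 2) = Real.exp (-u ^ 2 / 2) := by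
  have := integral_Iic_of_hasDerivAt_of_tendsto' (a := u) (m := 0)
    (fun t _ => hasDerivAt_gauss t) integrable_t_gauss.integrableOn tendsto_gauss_atBot
  simpa using this

lemma mills {u : ℝ} (hu : u < 0) :
    (-u) * ∫ t in Set.Iic u, Real.exp (-t ^ 2 / 2) ≤ Real.exp (-u ^ 2 / 2) := by
  rw [← int_neg_t_gauss u, ← MeasureTheory.integral_const_mul]
  refine setIntegral_mono_on (integrable_gauss.const_mul _).integrableOn
    integrable_t_gauss.integrableOn measurableSet_Iic ?_
  intro t ht
  have : t ≤ u := ht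
  have h2 : -u ≤ -t := by linarith
  exact mul_le_mul_of_nonneg_right h2 (Real.exp_pos _).le

lemma cdf_tendsto_atBot : Tendsto stdNormalCDF atBot (𝓝 0) := by
  have hb : Tendsto (fun u : ℝ => (Real.sqrt (2 * Real.pi))⁻¹ *
      (Real.exp (-u ^ 2 / 2) * (-u)⁻¹)) atBot (𝓝 0) := by
    have h1 : Tendsto (fun u : ℝ => (-u)⁻¹) atBot (𝓝 0) :=
      tendsto_inv_atTop_zero.comp tendsto_neg_atBot_atTop
    have := (tendsto_gauss_atBot.mul h1).const_mul ((Real.sqrt (2 * Real.pi))⁻¹)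
    simpa using this
  refine tendsto_of_tendsto_of_tendsto_of_le_of_le' tendsto_const_nhds hb ?_ ?_
  · exact Filter.Eventually.of_forall fun u => (cdf_pos u).le
  · filter_upwards [eventually_lt_atBot (0:ℝ)] with u hu
    rw [stdNormalCDF]
    refine mul_le_mul_of_nonneg_left ?_ cpos.le
    have hm := mills hu
    have hu' : (0:ℝ) < -u := by linarith
    calc ∫ t in Set.Iic u, Real.exp (-t ^ 2 / 2)
        ≤ Real.exp (-u ^ 2 / 2) / (-u) := (le_div_iff₀ hu').2 (by linarith [hm, mul_comm (-u) (∫ t in Set.Iic u, Real.exp (-t ^ 2 / 2))])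
      _ = Real.exp (-u ^ 2 / 2) * (-u)⁻¹ := by rw [div_eq_mul_inv]

lemma hasDerivAt_u (S ξ : ℝ) (hS : 0 < S) {x : ℝ} (hx : 0 < x) :
    HasDerivAt (fun y => ξ - (1 / S) * Real.log y) (-(1 / (S * x))) x := by
  have hl := (Real.hasDerivAt_log (ne_of_gt hx)).const_mul (1 / S)
  have := (hasDerivAt_const x ξ).sub hl
  refine this.congr_deriv ?_
  field_simp
  ring

lemma g_hasDerivAt (S ξ : ℝ) (hS : 0 < S) (g : ℝ → ℝ)
    (hg : ∀ x > 0, g x = (Real.sqrt (2 * Real.pi))⁻¹ *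
        Real.exp (-(ξ - (1 / S) * Real.log x) ^ 2 / 2) +
        ξ * stdNormalCDF (ξ - (1 / S) * Real.log x))
    {x : ℝ} (hx : 0 < x) :
    HasDerivAt g (-((Real.sqrt (2 * Real.pi))⁻¹ *
      Real.exp (-(ξ - (1 / S) * Real.log x) ^ 2 / 2) * Real.log x) / (S ^ 2 * x)) x := by
  have hu := hasDerivAt_u S ξ hS hx
  have h1 := (hasDerivAt_gauss (ξ - (1 / S) * Real.log x)).comp x hu
  have h2 := (hasDerivAt_cdf (ξ - (1 / S) * Real.log x)).comp x hu
  have hG := (h1.const_mul ((Real.sqrt (2 * Real.pi))⁻¹)).add (h2.const_mul ξ)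
  have hG' : HasDerivAt (fun y => (Real.sqrt (2 * Real.pi))⁻¹ *
      Real.exp (-(ξ - (1 / S) * Real.log y) ^ 2 / 2) +
      ξ * stdNormalCDF (ξ - (1 / S) * Real.log y))
      (-((Real.sqrt (2 * Real.pi))⁻¹ *
      Real.exp (-(ξ - (1 / S) * Real.log x) ^ 2 / 2) * Real.log x) / (S ^ 2 * x)) x := by
    refine hG.congr_deriv ?_
    field_simp
    ring
  refine hG'.congr_of_eventuallyEq ?_
  filter_upwards [isOpen_Ioi.mem_nhds hx] with y hy
  exact hg y hy

lemma f_hasDerivAt (S ξ : ℝ) (hS : 0 < S) (f : ℝ → ℝ)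
    (hf : ∀ x > 0, f x = stdNormalCDF (ξ + (1 / S) * Real.log x) -
        x ^ (-2 * ξ / S) * stdNormalCDF (ξ - (1 / S) * Real.log x))
    {x : ℝ} (hx : 0 < x) :
    HasDerivAt f (2 / S * x ^ (-2 * ξ / S - 1) *
      ((Real.sqrt (2 * Real.pi))⁻¹ * Real.exp (-(ξ - (1 / S) * Real.log x) ^ 2 / 2) +
        ξ * stdNormalCDF (ξ - (1 / S) * Real.log x))) x := by
  have hu := hasDerivAt_u S ξ hS hx
  have hv : HasDerivAt (fun y => ξ + (1 / S) * Real.log y) (1 / (S * x)) x := by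
    have hl := (Real.hasDerivAt_log (ne_of_gt hx)).const_mul (1 / S)
    have := (hasDerivAt_const x ξ).add hl
    refine this.congr_deriv ?_
    field_simp
    ring
  have h1 := (hasDerivAt_cdf (ξ + (1 / S) * Real.log x)).comp x hv
  have h2 := (hasDerivAt_cdf (ξ - (1 / S) * Real.log x)).comp x hu
  have h3 : HasDerivAt (fun y : ℝ => y ^ (-2 * ξ / S))
      ((-2 * ξ / S) * x ^ (-2 * ξ / S - 1)) x :=
    Real.hasDerivAt_rpow_const (Or.inl (ne_of_gt hx))
  have hG := h1.sub (h3.mul h2)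
  have hEv : Real.exp (-(ξ + (1 / S) * Real.log x) ^ 2 / 2) =
      x ^ (-2 * ξ / S) * Real.exp (-(ξ - (1 / S) * Real.log x) ^ 2 / 2) := by
    rw [Real.rpow_def_of_pos hx, ← Real.exp_add]
    congr 1
    field_simp
    ring
  have hxp : x ^ (-2 * ξ / S) = x ^ (-2 * ξ / S - 1) * x := by
    rw [Real.rpow_sub hx, Real.rpow_one]
    field_simp
  have hG' : HasDerivAt (fun y => stdNormalCDF (ξ + (1 / S) * Real.log y) -
      y ^ (-2 * ξ / S) * stdNormalCDF (ξ - (1 / S) * Real.log y))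
      (2 / S * x ^ (-2 * ξ / S - 1) *
      ((Real.sqrt (2 * Real.pi))⁻¹ * Real.exp (-(ξ - (1 / S) * Real.log x) ^ 2 / 2) +
        ξ * stdNormalCDF (ξ - (1 / S) * Real.log x))) x := by
    refine hG.congr_deriv ?_
    simp only [Function.comp_apply]
    rw [hEv, hxp]
    field_simp
    ring
  refine hG'.congr_of_eventuallyEq ?_
  filter_upwards [isOpen_Ioi.mem_nhds hx] with y hy
  exact hf y hy

lemma g_pos_of_one_lt (S ξ : ℝ) (hS : 0 < S) (hξ : ξ < 0) (g : ℝ → ℝ)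
    (hg : ∀ x > 0, g x = (Real.sqrt (2 * Real.pi))⁻¹ *
        Real.exp (-(ξ - (1 / S) * Real.log x) ^ 2 / 2) +
        ξ * stdNormalCDF (ξ - (1 / S) * Real.log x))
    {x : ℝ} (hx : 1 < x) : 0 < g x := by
  have hx0 : (0:ℝ) < x := lt_trans one_pos hx
  rw [hg x hx0]
  set u := ξ - (1 / S) * Real.log x with hu
  have hL : 0 < Real.log x := Real.log_pos hx
  have huξ : u < ξ := by
    rw [hu]
    have : 0 < (1 / S) * Real.log x := by positivity
    linarith
  have hune : u < 0 := lt_trans huξ hξ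
  have hm := mills hune
  -- N u = c * I
  rw [stdNormalCDF]
  set I := ∫ t in Set.Iic u, Real.exp (-t ^ 2 / 2) with hI
  have hIpos : 0 < I := by
    have := cdf_pos u
    rw [stdNormalCDF, ← hI] at this
    nlinarith [cpos]
  have hc := cpos
  -- exp(-u²/2) ≥ (-u) * I, and ξ - u = (1/S) log x ≥ 0
  have key : 0 < Real.exp (-u ^ 2 / 2) + ξ * I := by
    have h1 : (-u) * I ≤ Real.exp (-u ^ 2 / 2) := hm
    have h2 : 0 < (ξ - u) * I := mul_pos (sub_pos.2 huξ) hIpos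
    clear_value u I
    nlinarith [h1, h2]
  calc (0:ℝ) = (Real.sqrt (2 * Real.pi))⁻¹ * 0 := by ring
    _ < (Real.sqrt (2 * Real.pi))⁻¹ * (Real.exp (-u ^ 2 / 2) + ξ * I) :=
        mul_lt_mul_of_pos_left key hc
    _ = (Real.sqrt (2 * Real.pi))⁻¹ * Real.exp (-u ^ 2 / 2) +
        ξ * ((Real.sqrt (2 * Real.pi))⁻¹ * I) := by ring

lemma g_strictMonoOn (S ξ : ℝ) (hS : 0 < S) (g : ℝ → ℝ)
    (hg : ∀ x > 0, g x = (Real.sqrt (2 * Real.pi))⁻¹ *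
        Real.exp (-(ξ - (1 / S) * Real.log x) ^ 2 / 2) +
        ξ * stdNormalCDF (ξ - (1 / S) * Real.log x)) :
    StrictMonoOn g (Set.Ioc 0 1) := by
  refine strictMonoOn_of_deriv_pos (convex_Ioc 0 1) ?_ ?_
  · intro x hx
    exact (g_hasDerivAt S ξ hS g hg hx.1).continuousAt.continuousWithinAt
  · intro x hx
    rw [interior_Ioc] at hx
    rw [(g_hasDerivAt S ξ hS g hg hx.1).deriv]
    have hlog : Real.log x < 0 := Real.log_neg hx.1 hx.2
    have hE : 0 < Real.exp (-(ξ - (1 / S) * Real.log x) ^ 2 / 2) := Real.exp_pos _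
    have hc := cpos
    apply div_pos
    · nlinarith [mul_pos (mul_pos hc hE) (neg_pos.2 hlog)]
    · exact mul_pos (pow_pos hS 2) hx.1

lemma f_tendsto_zero (S ξ : ℝ) (hS : 0 < S) (hξ : ξ < 0) (f : ℝ → ℝ)
    (hf : ∀ x > 0, f x = stdNormalCDF (ξ + (1 / S) * Real.log x) -
        x ^ (-2 * ξ / S) * stdNormalCDF (ξ - (1 / S) * Real.log x)) :
    Tendsto f (𝓝[>] (0:ℝ)) (𝓝 0) := by
  have hp : 0 < -2 * ξ / S := div_pos (by linarith) hS
  have hlog : Tendsto Real.log (𝓝[>] (0:ℝ)) atBot := Real.tendsto_log_nhdsGT_zero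
  -- first term
  have hv : Tendsto (fun x => ξ + (1 / S) * Real.log x) (𝓝[>] (0:ℝ)) atBot := by
    have h1 : Tendsto (fun x => (1 / S) * Real.log x) (𝓝[>] (0:ℝ)) atBot :=
      (tendsto_const_mul_atBot_of_pos (by positivity)).2 hlog
    exact tendsto_atBot_add_const_left _ ξ h1
  have h1 : Tendsto (fun x => stdNormalCDF (ξ + (1 / S) * Real.log x)) (𝓝[>] (0:ℝ)) (𝓝 0) :=
    cdf_tendsto_atBot.comp hv
  -- x ^ p tends to 0
  have hxp : Tendsto (fun x : ℝ => x ^ (-2 * ξ / S)) (𝓝[>] (0:ℝ)) (𝓝 0) := by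
    have h2 : Tendsto (fun x : ℝ => Real.exp ((-2 * ξ / S) * Real.log x)) (𝓝[>] (0:ℝ)) (𝓝 0) :=
      Real.tendsto_exp_atBot.comp ((tendsto_const_mul_atBot_of_pos hp).2 hlog)
    refine h2.congr' ?_
    filter_upwards [self_mem_nhdsWithin] with x hx
    rw [Real.rpow_def_of_pos hx, mul_comm]
  -- second term via squeeze
  have h2 : Tendsto (fun x : ℝ => x ^ (-2 * ξ / S) *
      stdNormalCDF (ξ - (1 / S) * Real.log x)) (𝓝[>] (0:ℝ)) (𝓝 0) := by
    refine tendsto_of_tendsto_of_tendsto_of_le_of_le' tendsto_const_nhds hxp ?_ ?_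
    · filter_upwards [self_mem_nhdsWithin] with x hx
      have := cdf_pos (ξ - (1 / S) * Real.log x)
      have : (0:ℝ) ≤ x ^ (-2 * ξ / S) := Real.rpow_nonneg (le_of_lt hx) _
      positivity
    · filter_upwards [self_mem_nhdsWithin] with x hx
      have hn : (0:ℝ) ≤ x ^ (-2 * ξ / S) := Real.rpow_nonneg (le_of_lt hx) _
      calc x ^ (-2 * ξ / S) * stdNormalCDF (ξ - (1 / S) * Real.log x)
          ≤ x ^ (-2 * ξ / S) * 1 := mul_le_mul_of_nonneg_left (cdf_le_one _) hn
        _ = x ^ (-2 * ξ / S) := mul_one _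
  have := h1.sub h2
  rw [sub_zero] at this
  refine this.congr' ?_
  filter_upwards [self_mem_nhdsWithin] with x hx
  exact (hf x hx).symm

end SN

theorem f_monotonicity_with_zero (S ξ x₀ : ℝ) (hS : 0 < S) (hξ : ξ < 0)
    (g f : ℝ → ℝ)
    (hg : ∀ x > 0, g x = (Real.sqrt (2 * Real.pi))⁻¹ *
        Real.exp (-(ξ - (1 / S) * Real.log x) ^ 2 / 2) +
        ξ * stdNormalCDF (ξ - (1 / S) * Real.log x))
    (hx₀ : x₀ ∈ Set.Ioo (0 : ℝ) 1) (hgx₀ : g x₀ = 0)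
    (hf : ∀ x > 0, f x = stdNormalCDF (ξ + (1 / S) * Real.log x) -
        x ^ (-2 * ξ / S) * stdNormalCDF (ξ - (1 / S) * Real.log x)) :
    StrictAntiOn f (Set.Ioo 0 x₀) ∧ StrictMonoOn f (Set.Ioi x₀) ∧
    (∀ x ∈ Set.Ioo (0 : ℝ) 1, f x < 0) ∧ ∀ x > 1, 0 < f x := by
  obtain ⟨hx₀0, hx₀1⟩ := hx₀
  have hderiv : ∀ x : ℝ, 0 < x → HasDerivAt f (2 / S * x ^ (-2 * ξ / S - 1) * g x) x := by
    intro x hx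
    have := SN.f_hasDerivAt S ξ hS f hf hx
    rwa [← hg x hx] at this
  have gmono := SN.g_strictMonoOn S ξ hS g hg
  have hx₀mem : x₀ ∈ Set.Ioc (0:ℝ) 1 := ⟨hx₀0, le_of_lt hx₀1⟩
  have gpos : ∀ x : ℝ, x₀ < x → 0 < g x := by
    intro x hxx
    rcases le_or_gt x 1 with h | h
    · have : g x₀ < g x := gmono hx₀mem ⟨lt_trans hx₀0 hxx, h⟩ hxx
      linarith
    · exact SN.g_pos_of_one_lt S ξ hS hξ g hg h
  have gneg : ∀ x : ℝ, 0 < x → x < x₀ → g x < 0 := by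
    intro x h1 h2
    have : g x < g x₀ := gmono ⟨h1, le_of_lt (lt_trans h2 hx₀1)⟩ hx₀mem h2
    linarith
  have hanti : StrictAntiOn f (Set.Ioo 0 x₀) := by
    refine strictAntiOn_of_deriv_neg (convex_Ioo 0 x₀) ?_ ?_
    · intro x hx
      exact (hderiv x hx.1).continuousAt.continuousWithinAt
    · intro x hx
      rw [interior_Ioo] at hx
      rw [(hderiv x hx.1).deriv]
      have hg' := gneg x hx.1 hx.2
      have hxp : 0 < 2 / S * x ^ (-2 * ξ / S - 1) := by
        have := Real.rpow_pos_of_pos hx.1 (-2 * ξ / S - 1)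
        positivity
      nlinarith
  have hmono : StrictMonoOn f (Set.Ici x₀) := by
    refine strictMonoOn_of_deriv_pos (convex_Ici x₀) ?_ ?_
    · intro x hx
      exact (hderiv x (lt_of_lt_of_le hx₀0 hx)).continuousAt.continuousWithinAt
    · intro x hx
      rw [interior_Ici] at hx
      rw [(hderiv x (lt_trans hx₀0 hx)).deriv]
      have hg' := gpos x hx
      have hxp : 0 < 2 / S * x ^ (-2 * ξ / S - 1) := by
        have := Real.rpow_pos_of_pos (lt_trans hx₀0 hx) (-2 * ξ / S - 1)
        positivity
      exact mul_pos hxp hg'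
  have hf1 : f 1 = 0 := by
    rw [hf 1 one_pos]
    simp [Real.log_one, Real.one_rpow]
  have hle : ∀ y ∈ Set.Ioo (0:ℝ) x₀, f y ≤ 0 := by
    intro y hy
    have hev : ∀ᶠ z in 𝓝[>] (0:ℝ), f y ≤ f z := by
      filter_upwards [Ioo_mem_nhdsGT_of_mem (⟨le_refl 0, hy.1⟩ : (0:ℝ) ∈ Set.Ico 0 y)]
        with z hz
      exact le_of_lt (hanti ⟨hz.1, lt_trans hz.2 hy.2⟩ hy hz.2)
    exact ge_of_tendsto (SN.f_tendsto_zero S ξ hS hξ f hf) hev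
  have hneg : ∀ x ∈ Set.Ioo (0:ℝ) 1, f x < 0 := by
    intro x hx
    rcases lt_or_ge x x₀ with h | h
    · have hy : x / 2 ∈ Set.Ioo (0:ℝ) x₀ := ⟨by linarith [hx.1], by linarith⟩
      have : f x < f (x / 2) := hanti hy ⟨hx.1, h⟩ (by linarith [hx.1])
      linarith [hle _ hy]
    · have : f x < f 1 := hmono h (le_of_lt hx₀1) hx.2
      linarith
  refine ⟨hanti, hmono.mono Set.Ioi_subset_Ici_self, hneg, fun x hx => ?_⟩
  have : f 1 < f x := hmono (le_of_lt hx₀1) (le_of_lt (lt_trans hx₀1 hx)) hx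
  linarith
end
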